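/- Assume (A1), (A2) and (A3). Let p : ℝ → ℝ^N be a bounded C² solution of the traveling wave system −d_i p_i'' − c p_i' = (M p)_i + p_i − p_i (C p)_i (i = 1,…,N) for some c ∈ ℝ, with min_i inf_ℝ p_i > 0. Then for each i ∈ {1,…,N} the derivative p_i' belongs to L²(ℝ). -/

import Mathlib

open Matrix MeasureTheory intervalIntegral Filter
open scoped ComplexOrder


lemma quadform_nonneg {N : ℕ} (C : Matrix (Fin N) (Fin N) ℝ)
    (hC_normal : C * Cᵀ = Cᵀ * C)
    (hC_spec : ∀ μ ∈ spectrum ℂ (C.map (algebraMap ℝ ℂ)), 0 ≤ μ.re) :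
    ∀ q : Fin N → ℝ, 0 ≤ q ⬝ᵥ C *ᵥ q := by
  classical
  set A : Matrix (Fin N) (Fin N) ℂ := C.map (algebraMap ℝ ℂ) with hA
  have hAH : Aᴴ = Cᵀ.map (algebraMap ℝ ℂ) := by
    ext i j
    simp [A, Matrix.conjTranspose_apply, Matrix.map_apply, Matrix.transpose_apply,
      Complex.conj_ofReal]
  have hA_normal : A * Aᴴ = Aᴴ * A := by
    rw [hAH, hA, ← Matrix.map_mul, ← Matrix.map_mul, hC_normal]
  set H : Matrix (Fin N) (Fin N) ℂ := A + Aᴴ with hHdef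
  set K : Matrix (Fin N) (Fin N) ℂ := A - Aᴴ with hKdef
  have hH : H.IsHermitian := by
    unfold Matrix.IsHermitian
    rw [hHdef]
    simp [Matrix.conjTranspose_add]
    abel
  have hKH : Kᴴ = -K := by
    rw [hKdef]
    simp [Matrix.conjTranspose_sub]
  have hcomm : H * K = K * H := by
    have h1 : H * K = A * A - A * Aᴴ + (Aᴴ * A - Aᴴ * Aᴴ) := by
      rw [hHdef, hKdef]; noncomm_ring
    have h2 : K * H = A * A + A * Aᴴ - (Aᴴ * A + Aᴴ * Aᴴ) := by
      rw [hHdef, hKdef]; noncomm_ring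
    rw [h1, h2, hA_normal]; abel
  -- eigenvalues of H are nonnegative
  have key : ∀ i, 0 ≤ hH.eigenvalues i := by
    intro i
    set μ : ℝ := hH.eigenvalues i with hμdef
    have hμsp : (μ : ℂ) ∈ spectrum ℂ H := by
      have := hH.eigenvalues_mem_spectrum_real i
      exact spectrum.algebraMap_mem ℂ this
    set e := Matrix.toLinAlgEquiv' (R := ℂ) (n := Fin N) with hedef
    have hsp : (μ : ℂ) ∈ spectrum ℂ (e H) := by rwa [AlgEquiv.spectrum_eq]
    have hev : Module.End.HasEigenvalue (e H) (μ : ℂ) :=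
      Module.End.hasEigenvalue_iff_mem_spectrum.mpr hsp
    set E := Module.End.eigenspace (e H) (μ : ℂ) with hEdef
    have hinv : ∀ v ∈ E, (e K) v ∈ E := by
      intro v hv
      rw [hEdef, Module.End.mem_eigenspace_iff] at hv ⊢
      have hM : e H * e K = e K * e H := by
        rw [← _root_.map_mul, ← _root_.map_mul, hcomm]
      have : (e H) ((e K) v) = (e K) ((e H) v) := by
        calc (e H) ((e K) v) = (e H * e K) v := rfl
          _ = (e K * e H) v := by rw [hM]
          _ = (e K) ((e H) v) := rfl
      rw [this, hv]
      exact (e K).map_smul _ _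
    have hE_ne : E ≠ ⊥ := hev
    have : Nontrivial E := Submodule.nontrivial_iff_ne_bot.mpr hE_ne
    set R : E →ₗ[ℂ] E := (e K).restrict hinv with hRdef
    obtain ⟨κ, hκ⟩ := Module.End.exists_eigenvalue R
    obtain ⟨w0, hw0⟩ := hκ.exists_hasEigenvector
    set w : Fin N → ℂ := (w0 : Fin N → ℂ) with hwdef
    have hwne : w ≠ 0 := fun h => hw0.right (by exact_mod_cast Subtype.ext h)
    have hKw : K *ᵥ w = κ • w := by
      have h1 := hw0.apply_eq_smul
      have h2 : (e K) w = κ • w := by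
        have := congrArg (Subtype.val) h1
        simpa [hRdef, LinearMap.restrict_apply] using this
      rwa [hedef, Matrix.toLinAlgEquiv'_apply] at h2
    have hHw : H *ᵥ w = (μ : ℂ) • w := by
      have hmem : (e H) w = (μ : ℂ) • w := Module.End.mem_eigenspace_iff.mp w0.2
      rwa [hedef, Matrix.toLinAlgEquiv'_apply] at hmem
    have hAw : A *ᵥ w = (((μ : ℂ) + κ)/2) • w := by
      have h2 : H *ᵥ w + K *ᵥ w = (2 : ℂ) • (A *ᵥ w) := by
        rw [← Matrix.add_mulVec, hHdef, hKdef]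
        have h3 : A + Aᴴ + (A - Aᴴ) = (2 : ℂ) • A := by rw [two_smul]; abel
        rw [h3, Matrix.smul_mulVec]
      rw [hHw, hKw, ← add_smul] at h2
      have h4 := congrArg (fun v => (2 : ℂ)⁻¹ • v) h2
      simp only [smul_smul] at h4
      rw [inv_mul_cancel₀ (two_ne_zero), one_smul] at h4
      rw [← h4]
      congr 1
      ring
    have hAev : (((μ : ℂ) + κ)/2) ∈ spectrum ℂ A := by
      rw [← AlgEquiv.spectrum_eq e, ← Module.End.hasEigenvalue_iff_mem_spectrum]
      apply Module.End.hasEigenvalue_of_hasEigenvector (x := w)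
      refine ⟨?_, hwne⟩
      rw [Module.End.mem_eigenspace_iff, hedef, Matrix.toLinAlgEquiv'_apply, hAw]
    have hre : 0 ≤ ((((μ : ℂ) + κ))/2).re := hC_spec _ hAev
    -- κ.re = 0
    have hκre : κ.re = 0 := by
      set z : ℂ := star w ⬝ᵥ (K *ᵥ w) with hzdef
      have hK' : ∀ i j, (starRingEnd ℂ) (K i j) = -K j i := by
        intro i j
        have := congrFun (congrFun hKH j) i
        simpa [Matrix.conjTranspose_apply, Matrix.neg_apply] using this
      have hconj : (starRingEnd ℂ) z = -z := by
        rw [hzdef]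
        simp only [dotProduct, Matrix.mulVec, Pi.star_apply,
          Complex.star_def, Finset.mul_sum, map_sum]
        rw [← Finset.sum_neg_distrib, Finset.sum_comm]
        refine Finset.sum_congr rfl fun i _ => ?_
        rw [← Finset.sum_neg_distrib]
        refine Finset.sum_congr rfl fun j _ => ?_
        rw [_root_.map_mul, _root_.map_mul, Complex.conj_conj, hK']
        ring
      have hzre : z.re = 0 := by
        have := congrArg Complex.re hconj
        simp only [Complex.conj_re, Complex.neg_re] at this
        linarith
      have h2 : z = κ * (star w ⬝ᵥ w) := by
        rw [hzdef, hKw, dotProduct_smul, smul_eq_mul]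
      have hs : (star w ⬝ᵥ w) = ((∑ i, Complex.normSq (w i) : ℝ) : ℂ) := by
        push_cast
        simp [dotProduct, Pi.star_apply, Complex.star_def, mul_comm, Complex.mul_conj]
      have hspos : (0 : ℝ) < ∑ i, Complex.normSq (w i) := by
        have hex : ∃ i, w i ≠ 0 := by
          by_contra h
          push_neg at h
          exact hwne (funext h)
        obtain ⟨i, hi⟩ := hex
        apply Finset.sum_pos' (fun j _ => Complex.normSq_nonneg _)
        exact ⟨i, Finset.mem_univ i, Complex.normSq_pos.mpr hi⟩
      rw [h2, hs] at hzre
      rw [Complex.mul_re, Complex.ofReal_re, Complex.ofReal_im] at hzre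
      simp only [mul_zero, sub_zero] at hzre
      rcases mul_eq_zero.mp hzre with h | h
      · exact h
      · exact absurd h (ne_of_gt hspos)
    -- conclude μ ≥ 0
    set ν : ℂ := (((μ : ℂ) + κ))/2 with hνdef
    have h2ν : ((2:ℝ):ℂ) * ν = (μ : ℂ) + κ := by
      rw [hνdef]
      push_cast
      ring
    have : μ = 2 * ν.re := by
      have := congrArg Complex.re h2ν
      rw [Complex.re_ofReal_mul, Complex.add_re, Complex.ofReal_re, hκre, add_zero] at this
      linarith
    rw [hμdef] at this ⊢
    rw [this]
    linarith [hre]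
  have hpsd : H.PosSemidef := hH.posSemidef_iff_eigenvalues_nonneg.mpr key
  intro q
  set qc : Fin N → ℂ := fun i => ((q i : ℝ) : ℂ) with hqc
  have h0 : 0 ≤ star qc ⬝ᵥ (H *ᵥ qc) := hpsd.dotProduct_mulVec_nonneg qc
  have hcast : star qc ⬝ᵥ (H *ᵥ qc) = ((2 * (q ⬝ᵥ C *ᵥ q) : ℝ) : ℂ) := by
    have hstar : star qc = qc := by
      funext i; simp [hqc, Complex.conj_ofReal]
    have e1 : qc ⬝ᵥ (A *ᵥ qc) = ((q ⬝ᵥ C *ᵥ q : ℝ) : ℂ) := by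
      simp only [dotProduct, Matrix.mulVec, hqc, hA, Matrix.map_apply]
      push_cast
      rfl
    have e2 : qc ⬝ᵥ (Aᴴ *ᵥ qc) = ((q ⬝ᵥ C *ᵥ q : ℝ) : ℂ) := by
      rw [hAH]
      have htr : q ⬝ᵥ Cᵀ *ᵥ q = q ⬝ᵥ C *ᵥ q := by
        rw [Matrix.mulVec_transpose, Matrix.dotProduct_mulVec, dotProduct_comm]
      rw [← htr]
      simp only [dotProduct, Matrix.mulVec, hqc, Matrix.map_apply, Matrix.transpose_apply]
      push_cast
      rfl
    rw [hstar, hHdef, Matrix.add_mulVec, dotProduct_add, e1, e2]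
    push_cast
    ring
  rw [hcast] at h0
  have h1 : (0:ℝ) ≤ 2 * (q ⬝ᵥ C *ᵥ q) := by exact_mod_cast h0
  linarith

lemma entropy_nonneg {N : ℕ} (M : Matrix (Fin N) (Fin N) ℝ)
    (hM_offdiag : ∀ i j, i ≠ j → 0 ≤ M i j)
    (hM_lss : ∀ i, ∑ j, M i j = ∑ j, M j i)
    (hM_row : ∀ i, ∑ j, M i j = 0)
    (q : Fin N → ℝ) (hq : ∀ i, 0 < q i) :
    0 ≤ ∑ i, M.mulVec q i / q i := by
  have hcol : ∀ j, ∑ i, M i j = 0 := by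
    intro j; rw [← hM_lss j]; exact hM_row j
  have key : ∀ i j, M i j * (1 + Real.log (q j) - Real.log (q i)) ≤ M i j * (q j / q i) := by
    intro i j
    by_cases h : i = j
    · subst h
      rw [div_self (ne_of_gt (hq i))]
      ring_nf
      exact le_refl _
    · apply mul_le_mul_of_nonneg_left _ (hM_offdiag i j h)
      have hpos : 0 < q j / q i := div_pos (hq j) (hq i)
      have := Real.log_le_sub_one_of_pos hpos
      rw [Real.log_div (ne_of_gt (hq j)) (ne_of_gt (hq i))] at this
      linarith
  have hzero : ∑ i, ∑ j, M i j * (1 + Real.log (q j) - Real.log (q i)) = 0 := by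
    have expand : ∀ i, ∑ j, M i j * (1 + Real.log (q j) - Real.log (q i)) =
        (∑ j, M i j) * (1 - Real.log (q i)) + ∑ j, M i j * Real.log (q j) := by
      intro i
      rw [Finset.sum_mul, ← Finset.sum_add_distrib]
      apply Finset.sum_congr rfl
      intro j _
      ring
    simp_rw [expand, hM_row, zero_mul, zero_add]
    rw [Finset.sum_comm]
    have : ∀ j, ∑ i, M i j * Real.log (q j) = 0 := by
      intro j
      rw [← Finset.sum_mul, hcol, zero_mul]
    simp_rw [this, Finset.sum_const_zero]
  have hsum : ∑ i, M.mulVec q i / q i = ∑ i, ∑ j, M i j * (q j / q i) := by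
    apply Finset.sum_congr rfl
    intro i _
    rw [Matrix.mulVec, dotProduct, Finset.sum_div]
    apply Finset.sum_congr rfl
    intro j _
    ring
  rw [hsum, ← hzero]
  apply Finset.sum_le_sum
  intro i _
  exact Finset.sum_le_sum fun j _ => key i j

lemma dissipation_nonpos {N : ℕ} (M C : Matrix (Fin N) (Fin N) ℝ)
    (hM_offdiag : ∀ i j, i ≠ j → 0 ≤ M i j)
    (hM_lss : ∀ i, ∑ j, M i j = ∑ j, M j i)
    (hM_row : ∀ i, ∑ j, M i j = 0)
    (hCq : ∀ v : Fin N → ℝ, 0 ≤ v ⬝ᵥ C *ᵥ v)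
    (hC_row : ∀ i, ∑ j, C i j = 1)
    (q : Fin N → ℝ) (hq : ∀ i, 0 < q i) :
    ∑ i, (M.mulVec q i + q i - q i * C.mulVec q i) * (1 - 1/(q i)) ≤ 0 := by
  have hcolM : ∀ j, ∑ i, M i j = 0 := by
    intro j; rw [← hM_lss j]; exact hM_row j
  have hsplit : ∀ i, (M.mulVec q i + q i - q i * C.mulVec q i) * (1 - 1/(q i)) =
      (M.mulVec q i - M.mulVec q i / q i) +
      (-((q i - 1) * (C.mulVec q i - 1))) := by
    intro i
    have hqi : q i ≠ 0 := ne_of_gt (hq i)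
    field_simp
    ring
  rw [Finset.sum_congr rfl (fun i _ => hsplit i), Finset.sum_add_distrib,
    Finset.sum_sub_distrib]
  have h1 : ∑ i, M.mulVec q i = 0 := by
    simp_rw [Matrix.mulVec, dotProduct]
    rw [Finset.sum_comm]
    have : ∀ j, ∑ i, M i j * q j = 0 := by
      intro j; rw [← Finset.sum_mul, hcolM, zero_mul]
    simp_rw [this, Finset.sum_const_zero]
  have h2 : 0 ≤ ∑ i, M.mulVec q i / q i := entropy_nonneg M hM_offdiag hM_lss hM_row q hq
  have h3 : ∑ i, -((q i - 1) * (C.mulVec q i - 1)) =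
      -((fun i => q i - 1) ⬝ᵥ C *ᵥ (fun i => q i - 1)) := by
    rw [dotProduct, ← Finset.sum_neg_distrib]
    apply Finset.sum_congr rfl
    intro i _
    have : (C *ᵥ (fun i => q i - 1)) i = C.mulVec q i - 1 := by
      rw [Matrix.mulVec, dotProduct, Matrix.mulVec, dotProduct]
      simp_rw [mul_sub, mul_one, Finset.sum_sub_distrib, hC_row]
    rw [this]
  rw [h3]
  have h4 := hCq (fun i => q i - 1)
  linarith


lemma deriv_bound {di c B KF : ℝ} (hdi : 0 < di) (f F : ℝ → ℝ)
    (hf : ContDiff ℝ 2 f) (hB : ∀ x, |f x| ≤ B)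
    (hF : Continuous F) (hKF : ∀ x, |F x| ≤ KF)
    (heq : ∀ x, di * deriv (deriv f) x + c * deriv f x = -F x) :
    ∀ x, |deriv f x| ≤ Real.exp (|c|/di) * (2*B + KF/di) := by
  intro x
  have hfd : Differentiable ℝ f := hf.differentiable (by norm_num)
  have hf' : ContDiff ℝ 1 (deriv f) := by
    have := (contDiff_succ_iff_deriv (n := 1)).mp (by exact_mod_cast hf)
    exact this.2.2
  have hf'd : Differentiable ℝ (deriv f) := hf'.differentiable (by norm_num)
  set u : ℝ → ℝ := fun y => Real.exp (c*y/di) * deriv f y with hu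
  have huder : ∀ y, HasDerivAt u (Real.exp (c*y/di) * (-F y / di)) y := by
    intro y
    have h1 : HasDerivAt (fun y => Real.exp (c*y/di)) (Real.exp (c*y/di) * (c/di)) y := by
      have h0 : HasDerivAt (fun y : ℝ => c*y/di) (c/di) y := by
        simpa using ((hasDerivAt_id y).const_mul c).div_const di
      simpa using h0.exp
    have h2 : HasDerivAt (deriv f) (deriv (deriv f) y) y := (hf'd y).hasDerivAt
    have h3 := h1.mul h2
    refine h3.congr_deriv ?_
    have he := heq y
    have h4 : deriv (deriv f) y = (-F y - c * deriv f y)/di := by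
      field_simp
      linarith
    rw [h4]
    field_simp
    ring
  obtain ⟨θ, hθmem, hθ⟩ := exists_hasDerivAt_eq_slope f (deriv f) (by linarith : x < x + 1)
    (hfd.continuous.continuousOn) (fun y _ => (hfd y).hasDerivAt)
  have hθ2B : |deriv f θ| ≤ 2 * B := by
    rw [hθ]
    have h1 := hB (x+1); have h2 := hB x
    rw [abs_div]
    simp only [add_sub_cancel_left, abs_one, div_one]
    calc |f (x+1) - f x| ≤ |f (x+1)| + |f x| := abs_sub _ _
      _ ≤ 2 * B := by linarith
  have hint : IntervalIntegrable (fun s => Real.exp (c*s/di) * (-F s / di)) volume x θ := by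
    apply Continuous.intervalIntegrable
    exact (Real.continuous_exp.comp (by continuity)).mul ((hF.neg).div_const di)
  have hftc : u θ - u x = ∫ s in x..θ, Real.exp (c*s/di) * (-F s / di) :=
    (integral_eq_sub_of_hasDerivAt (fun s _ => huder s) hint).symm
  have hBnd0 : 0 ≤ B := le_trans (abs_nonneg _) (hB x)
  have hKF0 : 0 ≤ KF := le_trans (abs_nonneg _) (hKF x)
  have hexpbound : ∀ s, x ≤ s → s ≤ x + 1 →
      Real.exp (c*s/di) ≤ Real.exp (c*x/di + |c|/di) := by
    intro s hs1 hs2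
    apply Real.exp_le_exp.mpr
    have h5 : c * s ≤ c * x + |c| := by
      have h6 : c * (s-x) ≤ |c| := by
        calc c * (s-x) ≤ |c * (s-x)| := le_abs_self _
          _ = |c| * |s-x| := abs_mul _ _
          _ ≤ |c| * 1 := by
              apply mul_le_mul_of_nonneg_left _ (abs_nonneg c)
              rw [abs_of_nonneg (by linarith : (0:ℝ) ≤ s - x)]
              linarith
          _ = |c| := mul_one _
      linarith [h6]
    calc c*s/di ≤ (c*x + |c|)/di := by gcongr
      _ = c*x/di + |c|/di := by ring
  set E : ℝ := Real.exp (c*x/di + |c|/di) with hE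
  have hCint : |∫ s in x..θ, Real.exp (c*s/di) * (-F s / di)| ≤ E * (KF/di) := by
    have hle : ∀ s ∈ Set.uIoc x θ, ‖Real.exp (c*s/di) * (-F s / di)‖ ≤ E * (KF/di) := by
      intro s hs
      rw [Set.uIoc_of_le (le_of_lt hθmem.1)] at hs
      have h7 := hexpbound s (le_of_lt hs.1) (le_trans hs.2 (le_of_lt hθmem.2))
      rw [Real.norm_eq_abs, abs_mul, abs_of_pos (Real.exp_pos _), abs_div,
        abs_neg, abs_of_pos hdi]
      apply mul_le_mul h7 (by gcongr; exact hKF s) (by positivity) (le_of_lt (Real.exp_pos _))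
    calc |∫ s in x..θ, Real.exp (c*s/di) * (-F s / di)|
        ≤ E * (KF/di) * |θ - x| := norm_integral_le_of_norm_le_const hle
      _ ≤ E * (KF/di) * 1 := by
          apply mul_le_mul_of_nonneg_left _ (by positivity)
          rw [abs_of_pos (by linarith [hθmem.1] : (0:ℝ) < θ - x)]
          linarith [hθmem.2]
      _ = E * (KF/di) := mul_one _
  have huθ : |u θ| ≤ E * (2*B) := by
    rw [hu]
    simp only
    rw [abs_mul, abs_of_pos (Real.exp_pos _)]
    exact mul_le_mul (hexpbound θ (le_of_lt hθmem.1) (le_of_lt hθmem.2)) hθ2B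
      (abs_nonneg _) (le_of_lt (Real.exp_pos _))
  have hux : |u x| ≤ E * (2*B + KF/di) := by
    have h8 : u x = u θ - ∫ s in x..θ, Real.exp (c*s/di) * (-F s / di) := by
      linarith [hftc]
    rw [h8]
    calc |u θ - ∫ s in x..θ, Real.exp (c*s/di) * (-F s / di)|
        ≤ |u θ| + |∫ s in x..θ, Real.exp (c*s/di) * (-F s / di)| := abs_sub _ _
      _ ≤ E * (2*B) + E * (KF/di) := add_le_add huθ hCint
      _ = E * (2*B + KF/di) := by ring
  have hux2 : |u x| = Real.exp (c*x/di) * |deriv f x| := by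
    rw [hu]
    simp only
    rw [abs_mul, abs_of_pos (Real.exp_pos _)]
  rw [hux2, hE, Real.exp_add] at hux
  have hepos := Real.exp_pos (c*x/di)
  calc |deriv f x| = (Real.exp (c*x/di) * |deriv f x|) / Real.exp (c*x/di) := by
        field_simp
    _ ≤ (Real.exp (c*x/di) * Real.exp (|c|/di) * (2*B + KF/di)) / Real.exp (c*x/di) := by
        gcongr
    _ = Real.exp (|c|/di) * (2*B + KF/di) := by
        field_simp


lemma memL2_of_bdd_integrals (f : ℝ → ℝ) (hf : Continuous f) (I : ℝ)
    (h : ∀ n : ℕ, ∫ x in (-(n:ℝ))..(n:ℝ), (f x)^2 ≤ I) : MemLp f 2 (volume : Measure ℝ) := by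
  rw [memLp_two_iff_integrable_sq hf.aestronglyMeasurable]
  apply integrable_of_intervalIntegral_norm_bounded (l := atTop)
    (a := fun n : ℕ => -(n:ℝ)) (b := fun n : ℕ => (n:ℝ)) I
  · intro n
    exact ((hf.pow 2)).integrableOn_Ioc
  · exact tendsto_neg_atBot_iff.mpr tendsto_natCast_atTop_atTop
  · exact tendsto_natCast_atTop_atTop
  · apply Filter.Eventually.of_forall
    intro n
    have : (∫ x in (-(n:ℝ))..(n:ℝ), ‖(f x)^2‖) = ∫ x in (-(n:ℝ))..(n:ℝ), (f x)^2 := by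
      apply intervalIntegral.integral_congr
      intro x _
      simp only [Real.norm_eq_abs]
      exact abs_of_nonneg (sq_nonneg _)
    rw [this]
    exact h n

/-- Irreducibility of a matrix: there is no nonempty proper subset `S` of indices with
`M i j = 0` for all `i ∈ S`, `j ∉ S`. -/
def MatrixIrreducible {N : ℕ} (M : Matrix (Fin N) (Fin N) ℝ) : Prop :=
  ∀ S : Finset (Fin N), S.Nonempty → S ≠ Finset.univ → ∃ i ∈ S, ∃ j ∉ S, M i j ≠ 0

theorem stmt8 {N : ℕ} (hN : 2 ≤ N)
    (M C : Matrix (Fin N) (Fin N) ℝ) (d : Fin N → ℝ) (hd : ∀ i, 0 < d i)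
    -- (A1)
    (hM_offdiag : ∀ i j, i ≠ j → 0 ≤ M i j)
    (hM_irr : MatrixIrreducible M)
    (hM_lss : ∀ i, ∑ j, M i j = ∑ j, M j i)
    (hM_row : ∀ i, ∑ j, M i j = 0)
    -- (A2)
    (hC_pos : ∀ i j, 0 < C i j)
    (hC_normal : C * Cᵀ = Cᵀ * C)
    (hC_row : ∀ i, ∑ j, C i j = 1)
    -- (A3)
    (hC_spec : ∀ μ ∈ spectrum ℂ (C.map (algebraMap ℝ ℂ)), 0 ≤ μ.re)
    (c : ℝ) (p : ℝ → Fin N → ℝ)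
    (hp_C2 : ∀ i, ContDiff ℝ 2 (fun ξ => p ξ i))
    (hp_bdd : ∃ B : ℝ, ∀ ξ i, |p ξ i| ≤ B)
    (hp_inf : ∃ m > 0, ∀ ξ i, m ≤ p ξ i)
    (hp_eq : ∀ ξ i,
      -(d i) * deriv (deriv (fun x => p x i)) ξ - c * deriv (fun x => p x i) ξ
        = M.mulVec (p ξ) i + p ξ i - p ξ i * C.mulVec (p ξ) i) :
    ∀ i, MemLp (deriv (fun x => p x i)) 2 (volume : Measure ℝ) := by
  classical
  obtain ⟨B0, hB0⟩ := hp_bdd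
  obtain ⟨m, hm, hmp⟩ := hp_inf
  set B : ℝ := max B0 1 with hBdef
  have hB1 : (1:ℝ) ≤ B := le_max_right _ _
  have hB0' : ∀ ξ i, |p ξ i| ≤ B := fun ξ i => le_trans (hB0 ξ i) (le_max_left _ _)
  have hppos : ∀ ξ i, 0 < p ξ i := fun ξ i => lt_of_lt_of_le hm (hmp ξ i)
  have hpleB : ∀ ξ i, p ξ i ≤ B := fun ξ i => le_trans (le_abs_self _) (hB0' ξ i)
  have hBpos : (0:ℝ) < B := lt_of_lt_of_le one_pos hB1
  -- continuity and differentiability facts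
  have hpc : ∀ i, Continuous (fun x => p x i) := fun i => (hp_C2 i).continuous
  have hpd : ∀ i, Differentiable ℝ (fun x => p x i) := fun i =>
    (hp_C2 i).differentiable (by norm_num)
  have hp'contdiff : ∀ i, ContDiff ℝ 1 (deriv (fun x => p x i)) := by
    intro i
    have := (contDiff_succ_iff_deriv (n := 1)).mp (by exact_mod_cast hp_C2 i)
    exact this.2.2
  have hp'd : ∀ i, Differentiable ℝ (deriv (fun x => p x i)) := fun i =>
    (hp'contdiff i).differentiable (by norm_num)
  have hp'c : ∀ i, Continuous (deriv (fun x => p x i)) := fun i => (hp'd i).continuous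
  have hp''c : ∀ i, Continuous (deriv (deriv (fun x => p x i))) := by
    intro i
    have := (contDiff_succ_iff_deriv (n := 0)).mp (by exact_mod_cast hp'contdiff i)
    exact this.2.2.continuous
  -- the reaction term F
  set F : Fin N → ℝ → ℝ :=
    fun i ξ => M.mulVec (p ξ) i + p ξ i - p ξ i * C.mulVec (p ξ) i with hFdef
  have hmulVecC : ∀ (A : Matrix (Fin N) (Fin N) ℝ) i,
      Continuous (fun ξ => A.mulVec (p ξ) i) := by
    intro A i
    simp only [Matrix.mulVec, dotProduct]
    exact continuous_finset_sum _ fun j _ => continuous_const.mul (hpc j)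
  have hFc : ∀ i, Continuous (F i) := fun i =>
    ((hmulVecC M i).add (hpc i)).sub ((hpc i).mul (hmulVecC C i))
  set KF : Fin N → ℝ :=
    fun i => (∑ j, |M i j|) * B + B + B * ((∑ j, |C i j|) * B) with hKFdef
  have hmulVecB : ∀ (A : Matrix (Fin N) (Fin N) ℝ) i ξ,
      |A.mulVec (p ξ) i| ≤ (∑ j, |A i j|) * B := by
    intro A i ξ
    rw [Matrix.mulVec, dotProduct]
    calc |∑ j, A i j * p ξ j| ≤ ∑ j, |A i j * p ξ j| := Finset.abs_sum_le_sum_abs _ _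
      _ ≤ ∑ j, |A i j| * B := by
          apply Finset.sum_le_sum
          intro j _
          rw [abs_mul]
          exact mul_le_mul_of_nonneg_left (hB0' ξ j) (abs_nonneg _)
      _ = (∑ j, |A i j|) * B := by rw [Finset.sum_mul]
  have hKFb : ∀ i ξ, |F i ξ| ≤ KF i := by
    intro i ξ
    simp only [hFdef, hKFdef]
    have h1 := hmulVecB M i ξ
    have h2 := hmulVecB C i ξ
    have h3 := hB0' ξ i
    have h4 : |p ξ i * C.mulVec (p ξ) i| ≤ B * ((∑ j, |C i j|) * B) := by
      rw [abs_mul]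
      exact mul_le_mul h3 h2 (abs_nonneg _) (le_of_lt hBpos)
    calc |M.mulVec (p ξ) i + p ξ i - p ξ i * C.mulVec (p ξ) i|
        ≤ |M.mulVec (p ξ) i + p ξ i| + |p ξ i * C.mulVec (p ξ) i| := abs_sub _ _
      _ ≤ (∑ j, |M i j|) * B + B + B * ((∑ j, |C i j|) * B) := by
          have := abs_add_le (M.mulVec (p ξ) i) (p ξ i)
          linarith
  have heqF : ∀ i ξ,
      d i * deriv (deriv (fun x => p x i)) ξ + c * deriv (fun x => p x i) ξ = -(F i ξ) := by
    intro i ξ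
    have := hp_eq ξ i
    simp only [hFdef]
    linarith
  set Kd : Fin N → ℝ := fun i => Real.exp (|c|/d i) * (2*B + KF i/(d i)) with hKddef
  have hp'b : ∀ i x, |deriv (fun y => p y i) x| ≤ Kd i := fun i =>
    deriv_bound (hd i) _ (F i) (hp_C2 i) (fun x => hB0' x i) (hFc i)
      (fun x => hKFb i x) (heqF i)
  have hCq : ∀ v : Fin N → ℝ, 0 ≤ v ⬝ᵥ C *ᵥ v := quadform_nonneg C hC_normal hC_spec
  -- the Lyapunov-type function G and its derivative
  have hGder : ∀ x, HasDerivAt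
      (fun y => ∑ i, (d i * (deriv (fun z => p z i) y * (1 - (p y i)⁻¹))
        + c * (p y i - Real.log (p y i))))
      (∑ i, (d i * ((deriv (fun y => p y i) x)^2/(p x i)^2)
        + (-(F i x)) * (1 - (p x i)⁻¹))) x := by
    intro x
    apply HasDerivAt.fun_sum
    intro i _
    have hpne : p x i ≠ 0 := ne_of_gt (hppos x i)
    have h1 : HasDerivAt (fun y => p y i) (deriv (fun y => p y i) x) x := (hpd i x).hasDerivAt
    have h2 : HasDerivAt (deriv (fun y => p y i)) (deriv (deriv (fun y => p y i)) x) x :=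
      (hp'd i x).hasDerivAt
    have hinv : HasDerivAt (fun y => (p y i)⁻¹)
        (-(deriv (fun y => p y i) x) / (p x i)^2) x := h1.inv hpne
    have hlog : HasDerivAt (fun y => Real.log (p y i))
        (deriv (fun y => p y i) x / p x i) x := h1.log hpne
    have hprod := h2.mul ((hasDerivAt_const x (1:ℝ)).sub hinv)
    have hmain := (hprod.const_mul (d i)).add ((h1.sub hlog).const_mul c)
    refine hmain.congr_deriv ?_
    have he := heqF i x
    have hFi : -(F i x) = d i * deriv (deriv (fun y => p y i)) x
        + c * deriv (fun y => p y i) x := by linarith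
    rw [hFi]
    simp only [Pi.sub_apply]
    field_simp
    ring
  -- pointwise lower bound for the derivative of G
  have hdiss : ∀ x, 0 ≤ ∑ i, (-(F i x)) * (1 - (p x i)⁻¹) := by
    intro x
    have h := dissipation_nonpos M C hM_offdiag hM_lss hM_row hCq hC_row (p x)
      (fun i => hppos x i)
    have heqs : ∑ i, (-(F i x)) * (1 - (p x i)⁻¹)
        = -∑ i, (M.mulVec (p x) i + p x i - p x i * C.mulVec (p x) i) * (1 - 1/(p x i)) := by
      rw [← Finset.sum_neg_distrib]
      apply Finset.sum_congr rfl
      intro i _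
      simp only [hFdef, one_div]
      ring
    rw [heqs]
    linarith
  intro k
  have hG'lb : ∀ x, (d k / B^2) * (deriv (fun y => p y k) x)^2
      ≤ ∑ i, (d i * ((deriv (fun y => p y i) x)^2/(p x i)^2)
        + (-(F i x)) * (1 - (p x i)⁻¹)) := by
    intro x
    rw [Finset.sum_add_distrib]
    have h1 : (d k / B^2) * (deriv (fun y => p y k) x)^2
        ≤ ∑ i, d i * ((deriv (fun y => p y i) x)^2/(p x i)^2) := by
      have hterm : (d k / B^2) * (deriv (fun y => p y k) x)^2
          ≤ d k * ((deriv (fun y => p y k) x)^2/(p x k)^2) := by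
        have hdd := div_le_div_of_nonneg_left
          (mul_nonneg (le_of_lt (hd k)) (sq_nonneg (deriv (fun y => p y k) x)))
          (pow_pos (hppos x k) 2)
          (pow_le_pow_left₀ (le_of_lt (hppos x k)) (hpleB x k) 2)
        calc (d k / B^2) * (deriv (fun y => p y k) x)^2
            = d k * (deriv (fun y => p y k) x)^2 / B^2 := by ring
          _ ≤ d k * (deriv (fun y => p y k) x)^2 / (p x k)^2 := hdd
          _ = d k * ((deriv (fun y => p y k) x)^2/(p x k)^2) := by ring
      refine le_trans hterm (Finset.single_le_sum (f := fun i =>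
        d i * ((deriv (fun y => p y i) x)^2/(p x i)^2)) ?_ (Finset.mem_univ k))
      intro i _
      have := hd i
      positivity
    linarith [hdiss x]
  -- bound for G
  set Gb : ℝ := ∑ i : Fin N, (d i * (Kd i * (1 + 1/m))
    + |c| * (B + (|Real.log m| + |Real.log B|))) with hGbdef
  have hGbd : ∀ x, |∑ i, (d i * (deriv (fun z => p z i) x * (1 - (p x i)⁻¹))
      + c * (p x i - Real.log (p x i)))| ≤ Gb := by
    intro x
    calc |∑ i, (d i * (deriv (fun z => p z i) x * (1 - (p x i)⁻¹))
        + c * (p x i - Real.log (p x i)))|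
        ≤ ∑ i, |d i * (deriv (fun z => p z i) x * (1 - (p x i)⁻¹))
          + c * (p x i - Real.log (p x i))| := Finset.abs_sum_le_sum_abs _ _
      _ ≤ Gb := by
          rw [hGbdef]
          apply Finset.sum_le_sum
          intro i _
          have hinvb : |1 - (p x i)⁻¹| ≤ 1 + 1/m := by
            have h1 : (p x i)⁻¹ ≤ m⁻¹ := by
              apply inv_anti₀ hm (hmp x i)
            have h2 : 0 < (p x i)⁻¹ := inv_pos.mpr (hppos x i)
            rw [abs_le]
            constructor
            · rw [one_div]; linarith
            · rw [one_div]; linarith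
          have hlogb : |Real.log (p x i)| ≤ |Real.log m| + |Real.log B| := by
            have h1 : Real.log m ≤ Real.log (p x i) :=
              Real.log_le_log hm (hmp x i)
            have h2 : Real.log (p x i) ≤ Real.log B :=
              Real.log_le_log (hppos x i) (hpleB x i)
            rw [abs_le]
            constructor
            · have := neg_abs_le (Real.log m)
              have := abs_nonneg (Real.log B)
              linarith
            · have := le_abs_self (Real.log B)
              have := abs_nonneg (Real.log m)
              linarith
          have hplogb : |p x i - Real.log (p x i)| ≤ B + (|Real.log m| + |Real.log B|) := by
            calc |p x i - Real.log (p x i)| ≤ |p x i| + |Real.log (p x i)| := abs_sub _ _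
              _ ≤ B + (|Real.log m| + |Real.log B|) := add_le_add (hB0' x i) hlogb
          calc |d i * (deriv (fun z => p z i) x * (1 - (p x i)⁻¹))
              + c * (p x i - Real.log (p x i))|
              ≤ |d i * (deriv (fun z => p z i) x * (1 - (p x i)⁻¹))|
                + |c * (p x i - Real.log (p x i))| := abs_add_le _ _
            _ ≤ d i * (Kd i * (1 + 1/m)) + |c| * (B + (|Real.log m| + |Real.log B|)) := by
                apply add_le_add
                · rw [abs_mul, abs_of_pos (hd i), abs_mul]
                  apply mul_le_mul_of_nonneg_left _ (le_of_lt (hd i))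
                  apply mul_le_mul (hp'b i x) hinvb (abs_nonneg _)
                  have h0 : (0:ℝ) ≤ |deriv (fun y => p y i) x| := abs_nonneg _
                  linarith [hp'b i x]
                · rw [abs_mul]
                  exact mul_le_mul_of_nonneg_left hplogb (abs_nonneg _)
  -- continuity of the derivative expression
  have hG'c : Continuous (fun x => ∑ i, (d i * ((deriv (fun y => p y i) x)^2/(p x i)^2)
      + (-(F i x)) * (1 - (p x i)⁻¹))) := by
    apply continuous_finset_sum
    intro i _
    apply Continuous.add
    · apply Continuous.mul continuous_const
      apply Continuous.div ((hp'c i).pow 2) ((hpc i).pow 2)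
      intro x
      exact pow_ne_zero 2 (ne_of_gt (hppos x i))
    · exact ((hFc i).neg).mul (continuous_const.sub
        ((hpc i).inv₀ fun x => ne_of_gt (hppos x i)))
  -- uniform bound on integrals of (p_k')^2
  have hIbound : ∀ n : ℕ, ∫ x in (-(n:ℝ))..(n:ℝ), (deriv (fun y => p y k) x)^2
      ≤ 2*Gb / (d k / B^2) := by
    intro n
    have hab : (-(n:ℝ)) ≤ (n:ℝ) := by
      have : (0:ℝ) ≤ (n:ℝ) := Nat.cast_nonneg n
      linarith
    have hint2 : IntervalIntegrable (fun x => ∑ i, (d i * ((deriv (fun y => p y i) x)^2/(p x i)^2)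
        + (-(F i x)) * (1 - (p x i)⁻¹))) volume (-(n:ℝ)) (n:ℝ) :=
      hG'c.intervalIntegrable _ _
    have hint1 : IntervalIntegrable (fun x => (d k / B^2) * (deriv (fun y => p y k) x)^2)
        volume (-(n:ℝ)) (n:ℝ) :=
      (continuous_const.mul ((hp'c k).pow 2)).intervalIntegrable _ _
    have hftc : (∫ x in (-(n:ℝ))..(n:ℝ), ∑ i, (d i * ((deriv (fun y => p y i) x)^2/(p x i)^2)
        + (-(F i x)) * (1 - (p x i)⁻¹)))
        = (∑ i, (d i * (deriv (fun z => p z i) (n:ℝ) * (1 - (p (n:ℝ) i)⁻¹))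
          + c * (p (n:ℝ) i - Real.log (p (n:ℝ) i))))
        - (∑ i, (d i * (deriv (fun z => p z i) (-(n:ℝ)) * (1 - (p (-(n:ℝ)) i)⁻¹))
          + c * (p (-(n:ℝ)) i - Real.log (p (-(n:ℝ)) i)))) :=
      integral_eq_sub_of_hasDerivAt (fun x _ => hGder x) hint2
    have hmono : (∫ x in (-(n:ℝ))..(n:ℝ), (d k / B^2) * (deriv (fun y => p y k) x)^2)
        ≤ ∫ x in (-(n:ℝ))..(n:ℝ), ∑ i, (d i * ((deriv (fun y => p y i) x)^2/(p x i)^2)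
          + (-(F i x)) * (1 - (p x i)⁻¹)) := by
      apply intervalIntegral.integral_mono_on hab hint1 hint2
      intro x _
      exact hG'lb x
    rw [intervalIntegral.integral_const_mul] at hmono
    have hG2b : (∑ i, (d i * (deriv (fun z => p z i) (n:ℝ) * (1 - (p (n:ℝ) i)⁻¹))
          + c * (p (n:ℝ) i - Real.log (p (n:ℝ) i))))
        - (∑ i, (d i * (deriv (fun z => p z i) (-(n:ℝ)) * (1 - (p (-(n:ℝ)) i)⁻¹))
          + c * (p (-(n:ℝ)) i - Real.log (p (-(n:ℝ)) i)))) ≤ 2*Gb := by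
      have h1 := hGbd (n:ℝ)
      have h2 := hGbd (-(n:ℝ))
      rw [abs_le] at h1 h2
      linarith [h1.2, h2.1]
    have hdkB : 0 < d k / B^2 := div_pos (hd k) (pow_pos hBpos 2)
    have hfin : (d k / B^2) * (∫ x in (-(n:ℝ))..(n:ℝ), (deriv (fun y => p y k) x)^2)
        ≤ 2*Gb := by
      rw [hftc] at hmono
      linarith
    rw [le_div_iff₀ hdkB]
    linarith [hfin]
  exact memL2_of_bdd_integrals _ (hp'c k) _ hIbound
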